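/- Let (A, E, i, j, ∂) be an unrolled exact couple of bigraded abelian groups, and suppose there exists an integer s₀ such that E n s = 0 for all n and all s < s₀. Then for all integers n, s and every natural number r with (r : ℤ) ≥ s - s₀, one has B_r^{n,s} = B_∞^{n,s}; that is, the groups of r-boundaries in bidegree (n, s) stabilize from stage max(s - s₀, 0) onwards. -/

import Mathlib

/-- An unrolled exact couple of bigraded abelian groups. -/
structure UnrolledExactCouple where
  A : ℤ → ℤ → AddCommGrpCat
  E : ℤ → ℤ → AddCommGrpCat
  i : ∀ n s : ℤ, A n (s + 1) →+ A n s
  j : ∀ n s : ℤ, A n s →+ E n s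
  d : ∀ n s : ℤ, E n s →+ A (n - 1) (s + 1)
  exact_ij : ∀ n s : ℤ, (i n s).range = (j n s).ker
  exact_jd : ∀ n s : ℤ, (j n s).range = (d n s).ker
  exact_di : ∀ n s : ℤ, (d n s).range = (i (n - 1) s).ker

namespace UnrolledExactCouple

variable (C : UnrolledExactCouple)

/-- Transport along an equality of the filtration index. -/
def cast (n : ℤ) {s t : ℤ} (h : s = t) : C.A n s →+ C.A n t := by
  subst h; exact AddMonoidHom.id _

/-- The `r`-fold composite `i^r : A n (s+r) →+ A n s` of the maps `i`. -/
def ipow (n : ℤ) : ∀ (r : ℕ) (s : ℤ), C.A n (s + (r : ℤ)) →+ C.A n s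
  | 0, s => C.cast n (by simp)
  | r + 1, s =>
      ((C.i n s).comp ((ipow n r (s + 1)).comp (C.cast n (by push_cast; ring))))

/-- The transition map `A n t →+ A n s` for `s ≤ t`, a composite of the maps `i`. -/
def tr (n : ℤ) (t s : ℤ) (h : s ≤ t) : C.A n t →+ C.A n s :=
  (C.ipow n (t - s).toNat s).comp
    (C.cast n (by rw [Int.toNat_of_nonneg (by omega : (0:ℤ) ≤ t - s)]; omega))

/-- The colimit `G n` of the direct system `(A n s)` (s decreasing) along the maps `i`. -/
def G (n : ℤ) : Type :=
  AddCommGroup.DirectLimit (fun s : ℤᵒᵈ => C.A n (OrderDual.ofDual s))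
    (fun s t h => C.tr n (OrderDual.ofDual s) (OrderDual.ofDual t) h)

noncomputable instance (n : ℤ) : AddCommGroup (C.G n) := by
  unfold G; infer_instance

/-- The structure map `κ_s : A n s →+ G n`. -/
noncomputable def kappa (n s : ℤ) : C.A n s →+ C.G n :=
  AddCommGroup.DirectLimit.of (fun s : ℤᵒᵈ => C.A n (OrderDual.ofDual s))
    (fun s t h => C.tr n (OrderDual.ofDual s) (OrderDual.ofDual t) h) (OrderDual.toDual s)

/-- The abutment filtration `F^s G n := im κ_s`. -/
noncomputable def F (n s : ℤ) : AddSubgroup (C.G n) :=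
  (C.kappa n s).range

/-- The `r`-cycles `Z_r^{n,s} := ∂⁻¹(im(i^r : A (n-1) (s+1+r) → A (n-1) (s+1)))`. -/
def Z (n s : ℤ) (r : ℕ) : AddSubgroup (C.E n s) :=
  ((C.ipow (n - 1) r (s + 1)).range).comap (C.d n s)

/-- The `r`-boundaries `B_r^{n,s} := j(ker(i^r : A n s → A n (s-r)))`. -/
def B (n s : ℤ) (r : ℕ) : AddSubgroup (C.E n s) :=
  ((C.tr n s (s - (r : ℤ)) (by omega)).ker).map (C.j n s)

/-- The permanent cycles `Z_∞^{n,s} = ⋂_r Z_r^{n,s}`. -/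
def Zinf (n s : ℤ) : AddSubgroup (C.E n s) := ⨅ r : ℕ, C.Z n s r

/-- The infinite boundaries `B_∞^{n,s} = ⋃_r B_r^{n,s}`. -/
def Binf (n s : ℤ) : AddSubgroup (C.E n s) := ⨆ r : ℕ, C.B n s r

/-- Conditional convergence: for every `n` the limit and `lim¹` of the tower
`(A n s)_s` vanish, i.e. the map `(a_s)_s ↦ (a_s - i(a_{s+1}))_s` is bijective. -/
def ConvergesConditionally : Prop :=
  ∀ n : ℤ, Function.Bijective
    (fun (a : ∀ s : ℤ, C.A n s) => fun s : ℤ => a s - C.i n s (a (s + 1)))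

/-- Strong convergence. -/
def ConvergesStrongly : Prop :=
  (∀ n : ℤ,
      (⨅ s : ℤ, C.F n s) = ⊥ ∧
      (∀ b : ℤ → C.G n, (∀ s, b s ∈ C.F n s) →
        ∃ x : ℤ → C.G n, (∀ s, x s ∈ C.F n s) ∧ ∀ s, x s - x (s + 1) = b s)) ∧
    (∀ n s : ℤ, C.Zinf n s = (C.d n s).ker)

end UnrolledExactCouple


namespace UnrolledExactCouple

lemma cast_cast' (C : UnrolledExactCouple) (n : ℤ) {s t u : ℤ} (h1 : s = t) (h2 : t = u)
    (x : C.A n s) : C.cast n h2 (C.cast n h1 x) = C.cast n (h1.trans h2) x := by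
  subst h1; subst h2; rfl

lemma ipow_index_congr (C : UnrolledExactCouple) (n : ℤ) {r1 r2 : ℕ} (hrr : r1 = r2) (s : ℤ)
    (x : C.A n (s + (r1 : ℤ))) :
    C.ipow n r1 s x = C.ipow n r2 s (C.cast n (by rw [hrr]) x) := by
  subst hrr; rfl

lemma tr_succ' (C : UnrolledExactCouple) (n u t : ℤ) (hle : t + 1 ≤ u) (x : C.A n u) :
    C.tr n u t (by omega) x = C.i n t (C.tr n u (t + 1) hle x) := by
  have hk : (u - t).toNat = (u - (t + 1)).toNat + 1 := by omega
  show C.ipow n (u - t).toNat t (C.cast n _ x) = _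
  rw [C.ipow_index_congr n hk]
  show C.i n t (C.ipow n ((u - (t + 1)).toNat) (t + 1)
      (C.cast n _ (C.cast n _ (C.cast n _ x)))) = _
  rw [C.cast_cast', C.cast_cast']
  rfl

end UnrolledExactCouple

/-- If `E n s = 0` for all `s < s₀`, then for every `n`, `s` and every natural number `r`
with `(r : ℤ) ≥ s - s₀`, the `r`-boundaries equal `B_∞^{n,s} = ⋃_{r'} B_{r'}^{n,s}`;
that is, the boundaries in bidegree `(n, s)` stabilize from stage `max (s - s₀) 0` on. -/
theorem UnrolledExactCouple.boundaries_stabilize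
    (C : UnrolledExactCouple) (s₀ : ℤ)
    (h : ∀ n s : ℤ, s < s₀ → ∀ x : C.E n s, x = 0)
    (n s : ℤ) (r : ℕ) (hr : s - s₀ ≤ (r : ℤ)) :
    (C.B n s r : Set (C.E n s)) = ⋃ r' : ℕ, (C.B n s r' : Set (C.E n s)) := by
  obtain ⟨m, rfl⟩ : ∃ m : ℤ, n = m - 1 := ⟨n + 1, by ring⟩
  have inj : ∀ t : ℤ, t < s₀ → Function.Injective (C.i (m - 1) t) := by
    intro t ht
    rw [← AddMonoidHom.ker_eq_bot_iff, ← C.exact_di m t]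
    ext y
    simp only [AddMonoidHom.mem_range, AddSubgroup.mem_bot]
    constructor
    · rintro ⟨x, rfl⟩; rw [h m t ht x]; simp
    · rintro rfl; exact ⟨0, by simp [h m t ht 0]⟩
  have trz : ∀ (t t' : ℤ) (h1 : t ≤ s) (h2 : t' ≤ s) (ht : t = t') (x : C.A (m-1) s),
      C.tr (m-1) s t h1 x = 0 → C.tr (m-1) s t' h2 x = 0 := by
    intro t t' h1 h2 ht x; subst ht; exact id
  have M : ∀ (k : ℕ) (t u : ℤ) (hu : u = t + k) (hus : u ≤ s) (x : C.A (m-1) s),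
      C.tr (m-1) s u hus x = 0 → C.tr (m-1) s t (by omega) x = 0 := by
    intro k
    induction k with
    | zero => intro t u hu hus x hx; exact trz u t hus (by omega) (by omega) x hx
    | succ k ih =>
      intro t u hu hus x hx
      have h1 : C.tr (m-1) s (t+1) (by omega) x = 0 := ih (t+1) u (by omega) hus x hx
      rw [C.tr_succ' (m-1) s t (by omega) x, h1, map_zero]
  have K : ∀ (k : ℕ) (t u : ℤ) (hu : u = t - k) (hts : t ≤ s) (hts0 : t ≤ s₀)
      (x : C.A (m-1) s),
      C.tr (m-1) s u (by omega) x = 0 → C.tr (m-1) s t hts x = 0 := by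
    intro k
    induction k with
    | zero => intro t u hu hts _ x hx; exact trz u t (by omega) hts (by omega) x hx
    | succ k ih =>
      intro t u hu hts hts0 x hx
      have h1 : C.tr (m-1) s (t-1) (by omega) x = 0 :=
        ih (t-1) u (by omega) (by omega) (by omega) x hx
      have h2 := C.tr_succ' (m-1) s (t-1) (by omega) x
      rw [h1] at h2
      have h3 : C.tr (m-1) s (t-1+1) (by omega) x = 0 := by
        apply inj (t-1) (by omega)
        rw [← h2, map_zero]
      exact trz (t-1+1) t (by omega) hts (by omega) x h3
  ext x
  simp only [SetLike.mem_coe, Set.mem_iUnion]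
  constructor
  · exact fun hx => ⟨r, hx⟩
  · rintro ⟨r', hx⟩
    unfold UnrolledExactCouple.B at hx ⊢
    rw [AddSubgroup.mem_map] at hx ⊢
    obtain ⟨a, ha, rfl⟩ := hx
    refine ⟨a, ?_, rfl⟩
    rw [AddMonoidHom.mem_ker] at ha ⊢
    by_cases hcase : r' ≤ r
    · exact M (r - r') (s - (r:ℤ)) (s - (r':ℤ)) (by omega) (by omega) a ha
    · exact K (r' - r) (s - (r:ℤ)) (s - (r':ℤ)) (by omega) (by omega) (by omega) a ha
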